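/- Let U be a nonempty finite index set, K a nonempty finite type, and r : (U → K) → ℝ a probability mass function with r(y) > 0 for all y and ∑_y r(y) = 1. For each m ∈ U let q_m : K → ℝ be a probability mass function with q_m(k) > 0 for all k and ∑_k q_m(k) = 1, and let q(y) = ∏_{m∈U} q_m(y_m). Fix n ∈ U and for k ∈ K set log F(k) = ∑_{z : (U∖{n}) → K} (∏_{m≠n} q_m(z_m)) · log r(z ∪ {n ↦ k}). Then the negative KL divergence decomposes as ∑_y q(y) · (log r(y) − log q(y)) = ∑_{k∈K} q_n(k) · log F(k) − ∑_{k∈K} q_n(k) · log q_n(k) + C, where C = −∑_{m∈U, m≠n} ∑_{k∈K} q_m(k) · log q_m(k) does not depend on q_n. -/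

import Mathlib

open Finset

section Aux

variable {S : Type*} [Fintype S] [DecidableEq S] {K : Type*} [Fintype K]

lemma aux_prod_sum_one (p : S → K → ℝ) (hp1 : ∀ m, ∑ k, p m k = 1) :
    ∑ z : S → K, ∏ m, p m (z m) = 1 := by
  rw [← Fintype.prod_sum]
  simp [hp1]

lemma aux_entropy (p : S → K → ℝ) (hp : ∀ m k, 0 < p m k) (hp1 : ∀ m, ∑ k, p m k = 1) :
    ∑ z : S → K, (∏ m, p m (z m)) * Real.log (∏ m, p m (z m))
      = ∑ m, ∑ k, p m k * Real.log (p m k) := by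
  have hlog : ∀ z : S → K, Real.log (∏ m, p m (z m)) = ∑ m, Real.log (p m (z m)) := fun z =>
    Real.log_prod (fun m _ => (hp m (z m)).ne')
  simp only [hlog, Finset.mul_sum]
  rw [Finset.sum_comm]
  refine Finset.sum_congr rfl (fun i _ => ?_)
  have hsplit : ∀ z : S → K,
      ∏ j, (if j = i then p j (z j) * Real.log (p j (z j)) else p j (z j))
        = (p i (z i) * Real.log (p i (z i))) * ∏ j ∈ univ.erase i, p j (z j) := by
    intro z
    rw [← Finset.mul_prod_erase univ _ (Finset.mem_univ i), if_pos rfl]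
    congr 1
    exact Finset.prod_congr rfl (fun j hj => if_neg (Finset.mem_erase.mp hj).1)
  have key : ∀ z : S → K, (∏ m, p m (z m)) * Real.log (p i (z i))
      = ∏ j, (if j = i then p j (z j) * Real.log (p j (z j)) else p j (z j)) := by
    intro z
    rw [hsplit, ← Finset.mul_prod_erase univ (fun j => p j (z j)) (Finset.mem_univ i)]
    ring
  simp only [key]
  rw [← Fintype.prod_sum (fun (j : S) (k : K) =>
    if j = i then p j k * Real.log (p j k) else p j k)]
  rw [Finset.prod_eq_single_of_mem i (Finset.mem_univ i)
    (fun j _ hj => by simp only [if_neg hj]; exact hp1 j)]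
  simp

end Aux

/-- Decomposition of the negative KL divergence between a mean-field distribution
`q(y) = ∏_{m ∈ U} q m (y m)` and a strictly positive distribution `r` with respect
to a fixed coordinate `n`:
`∑ y, q(y) (log r(y) - log q(y)) = ∑ k, q n k * log F k - ∑ k, q n k * log (q n k) + C`,
where `log F k = E_{z ∼ ∏_{m ≠ n} q m} [log r (z ∪ {n ↦ k})]` and
`C = -∑_{m ≠ n} ∑ k, q m k * log (q m k)` does not depend on `q n`. -/
theorem meanfield_kl_decomposition {U : Type*} [Fintype U] [DecidableEq U] [Nonempty U]
    {K : Type*} [Fintype K] [Nonempty K]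
    (r : (U → K) → ℝ) (hr : ∀ y, 0 < r y) (hr1 : ∑ y, r y = 1)
    (q : U → K → ℝ) (hq : ∀ m k, 0 < q m k) (hq1 : ∀ m, ∑ k, q m k = 1)
    (n : U) :
    let ext : ({m : U // m ≠ n} → K) → K → (U → K) := fun z k m =>
      if h : m = n then k else z ⟨m, h⟩
    let logF : K → ℝ := fun k =>
      ∑ z : {m : U // m ≠ n} → K, (∏ m, q m.1 (z m)) * Real.log (r (ext z k))
    ∑ y : U → K, (∏ m, q m (y m)) * (Real.log (r y) - Real.log (∏ m, q m (y m)))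
      = ∑ k, q n k * logF k - ∑ k, q n k * Real.log (q n k)
        + (- ∑ m ∈ Finset.univ.filter (fun m => m ≠ n), ∑ k, q m k * Real.log (q m k)) := by
  intro ext logF
  set P : ({m : U // m ≠ n} → K) → ℝ := fun z => ∏ m, q m.1 (z m) with hP
  set g : K × ({m : U // m ≠ n} → K) → (U → K) := fun p => ext p.2 p.1 with hg
  have hbij : Function.Bijective g := by
    rw [Function.bijective_iff_has_inverse]
    refine ⟨fun y => (y n, fun m => y m.1), ?_, ?_⟩
    · rintro ⟨k, z⟩
      refine Prod.ext ?_ ?_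
      · simp only [hg, ext]
        simp
      · funext m
        simp only [hg, ext]
        simp [m.2]
    · intro y
      funext m
      by_cases h : m = n
      · subst h; simp only [hg, ext]; simp
      · simp only [hg, ext]; simp [h]
  have hsplit : ∀ f : (U → K) → ℝ, ∑ y, f y = ∑ k, ∑ z : {m : U // m ≠ n} → K, f (ext z k) := by
    intro f
    rw [← Fintype.sum_bijective g hbij (fun p => f (g p)) f (fun p => rfl),
        Fintype.sum_prod_type]
  have hprod : ∀ (z : {m : U // m ≠ n} → K) (k : K),
      (∏ m, q m (ext z k m)) = q n k * P z := by
    intro z k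
    rw [← Finset.mul_prod_erase univ _ (Finset.mem_univ n)]
    congr 1
    · simp only [ext]; simp
    · rw [Finset.prod_subtype (p := fun m => m ≠ n) (univ.erase n) (by simp)
        (fun m => q m (ext z k m))]
      refine Finset.prod_congr rfl (fun m _ => ?_)
      simp only [ext, hP]
      simp [m.2]
  have hPpos : ∀ z, 0 < P z := fun z => Finset.prod_pos (fun m _ => hq m.1 (z m))
  have hP1 : ∑ z, P z = 1 := aux_prod_sum_one _ (fun m => hq1 m.1)
  have hEnt : ∑ z, P z * Real.log (P z)
      = ∑ m : {m : U // m ≠ n}, ∑ k, q m.1 k * Real.log (q m.1 k) :=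
    aux_entropy _ (fun m k => hq m.1 k) (fun m => hq1 m.1)
  rw [hsplit (fun y => (∏ m, q m (y m)) * (Real.log (r y) - Real.log (∏ m, q m (y m))))]
  have hterm : ∀ (k : K) (z : {m : U // m ≠ n} → K),
      (∏ m, q m (ext z k m)) * (Real.log (r (ext z k)) - Real.log (∏ m, q m (ext z k m)))
      = q n k * (P z * Real.log (r (ext z k)))
        - (q n k * Real.log (q n k)) * P z - q n k * (P z * Real.log (P z)) := by
    intro k z
    rw [hprod, Real.log_mul (hq n k).ne' (hPpos z).ne']
    ring
  simp only [hterm]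
  have hinner : ∀ k : K, ∑ z : {m : U // m ≠ n} → K,
      (q n k * (P z * Real.log (r (ext z k)))
        - (q n k * Real.log (q n k)) * P z - q n k * (P z * Real.log (P z)))
      = q n k * logF k - q n k * Real.log (q n k)
        - q n k * (∑ m : {m : U // m ≠ n}, ∑ j, q m.1 j * Real.log (q m.1 j)) := by
    intro k
    rw [Finset.sum_sub_distrib, Finset.sum_sub_distrib, ← Finset.mul_sum, ← Finset.mul_sum,
        ← Finset.mul_sum, hP1, hEnt, mul_one]
  simp only [hinner]
  rw [Finset.sum_sub_distrib, Finset.sum_sub_distrib, ← Finset.sum_mul, hq1, one_mul]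
  have hfilter := Finset.sum_subtype (p := fun m => m ≠ n) (F := inferInstance)
    (Finset.univ.filter fun m => m ≠ n) (fun x => by simp)
    (fun m => ∑ k, q m k * Real.log (q m k))
  rw [← hfilter]
  ring
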